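/- arXiv:2108.00393 — 4 statements merged into one kernel-verified Lean document; each statement's English description precedes it below -/
import Mathlib

section
/- Let F : ℝ^d → ℝ satisfy Assumption (A) with constants L, C_u, C_l, M, and let α > 0. Then there exist constants b₁, b₂ > 0, depending only on α, M, C_u and C_l, such that for every Borel probability measure μ on ℝ^d with finite second moment, |X^α(μ)|² ≤ b₁ + b₂ ∫_{ℝ^d} |x|² μ(dx). -/
open MeasureTheory Filter

set_option maxHeartbeats 1000000

lemma texp_le {α a t : ℝ} (hα : 0 < α) (ha : 0 ≤ a) (ht : 0 ≤ t) :
    t * Real.exp (-α * t) ≤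
      a * Real.exp (-α * t) + 2 / (α * Real.exp 1) * Real.exp (-α * a / 2) := by
  have he : (0:ℝ) < Real.exp 1 := Real.exp_pos 1
  rcases le_total t a with h | h
  · have : t * Real.exp (-α * t) ≤ a * Real.exp (-α * t) :=
      mul_le_mul_of_nonneg_right h (Real.exp_pos _).le
    have h2 : 0 ≤ 2 / (α * Real.exp 1) * Real.exp (-α * a / 2) := by positivity
    linarith
  · have key : t ≤ 2 / (α * Real.exp 1) * Real.exp (α * t / 2) := by
      have h1 : α * t / 2 - 1 + 1 ≤ Real.exp (α * t / 2 - 1) := Real.add_one_le_exp _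
      have h2 : Real.exp (α * t / 2 - 1) = Real.exp (α * t / 2) / Real.exp 1 := Real.exp_sub _ _
      rw [h2] at h1
      rw [div_mul_eq_mul_div, le_div_iff₀ (by positivity)]
      calc t * (α * Real.exp 1) = (α * t / 2 - 1 + 1) * Real.exp 1 * 2 := by ring
        _ ≤ Real.exp (α * t / 2) / Real.exp 1 * Real.exp 1 * 2 := by nlinarith
        _ = 2 * Real.exp (α * t / 2) := by field_simp
    have step : t * Real.exp (-α * t) ≤ 2 / (α * Real.exp 1) * Real.exp (-α * t / 2) := by
      calc t * Real.exp (-α * t)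
          ≤ (2 / (α * Real.exp 1) * Real.exp (α * t / 2)) * Real.exp (-α * t) :=
            mul_le_mul_of_nonneg_right key (Real.exp_pos _).le
        _ = 2 / (α * Real.exp 1) * Real.exp (-α * t / 2) := by
            rw [mul_assoc, ← Real.exp_add]; ring_nf
    have mono : Real.exp (-α * t / 2) ≤ Real.exp (-α * a / 2) := by
      apply Real.exp_le_exp.2; nlinarith
    have h3 : 0 ≤ a * Real.exp (-α * t) := by positivity
    calc t * Real.exp (-α * t) ≤ 2 / (α * Real.exp 1) * Real.exp (-α * t / 2) := step
      _ ≤ 2 / (α * Real.exp 1) * Real.exp (-α * a / 2) := by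
          apply mul_le_mul_of_nonneg_left mono (by positivity)
      _ ≤ a * Real.exp (-α * t) + 2 / (α * Real.exp 1) * Real.exp (-α * a / 2) := by linarith

lemma cont_of_A {d : ℕ} {F : EuclideanSpace ℝ (Fin d) → ℝ} {L : ℝ}
    (h1 : ∀ x y, |F x - F y| ≤ L * (‖x‖ + ‖y‖) * ‖x - y‖) : Continuous F := by
  rw [continuous_iff_continuousAt]
  intro x₀
  rw [ContinuousAt, tendsto_iff_dist_tendsto_zero]
  have hb : Tendsto (fun x => L * (‖x‖ + ‖x₀‖) * ‖x - x₀‖) (nhds x₀) (nhds 0) := by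
    have : Continuous (fun x : EuclideanSpace ℝ (Fin d) => L * (‖x‖ + ‖x₀‖) * ‖x - x₀‖) := by
      continuity
    have h0 := this.tendsto x₀
    simpa using h0
  refine squeeze_zero (fun x => dist_nonneg) (fun x => ?_) hb
  rw [Real.dist_eq]
  exact h1 x x₀


/-- Assumption (A) on the cost function `F` with constants `L, Cu, Cl, M`. -/
def AssumptionA {d : ℕ} (F : EuclideanSpace ℝ (Fin d) → ℝ) (L Cu Cl M : ℝ) : Prop :=
  (∀ x y, |F x - F y| ≤ L * (‖x‖ + ‖y‖) * ‖x - y‖) ∧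
  BddBelow (Set.range F) ∧
  (∀ x, F x - sInf (Set.range F) ≤ Cu * (1 + ‖x‖ ^ 2)) ∧
  (∀ x, M ≤ ‖x‖ → Cl * ‖x‖ ^ 2 ≤ F x - sInf (Set.range F))

/-- The regularized global best `X^α(μ) = (∫ x e^{-αF(x)} dμ)/(∫ e^{-αF(x)} dμ)`. -/
noncomputable def Xalpha {d : ℕ} (α : ℝ) (F : EuclideanSpace ℝ (Fin d) → ℝ)
    (μ : Measure (EuclideanSpace ℝ (Fin d))) : EuclideanSpace ℝ (Fin d) :=
  (∫ x, Real.exp (-α * F x) ∂μ)⁻¹ • ∫ x, Real.exp (-α * F x) • x ∂μ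

/-- Quadratic bound on the regularized global best: there exist constants `b₁, b₂ > 0`
depending only on `α, M, Cu, Cl` such that `|X^α(μ)|² ≤ b₁ + b₂ ∫ |x|² dμ` for every Borel
probability measure `μ` with finite second moment, for every `F` satisfying Assumption (A). -/
theorem Xalpha_sq_bound (d : ℕ) (α M Cu Cl : ℝ)
    (hα : 0 < α) (hM : 0 < M) (hCu : 0 < Cu) (hCl : 0 < Cl) :
    ∃ b₁ b₂ : ℝ, 0 < b₁ ∧ 0 < b₂ ∧
      ∀ (L : ℝ) (F : EuclideanSpace ℝ (Fin d) → ℝ), 0 < L → AssumptionA F L Cu Cl M →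
        ∀ (μ : Measure (EuclideanSpace ℝ (Fin d))), IsProbabilityMeasure μ →
          Integrable (fun x => ‖x‖ ^ 2) μ →
          ‖Xalpha α F μ‖ ^ 2 ≤ b₁ + b₂ * ∫ x, ‖x‖ ^ 2 ∂μ := by
  refine ⟨M ^ 2 + 2 * Cu / Cl + 2 / (α * Real.exp 1 * Cl), 2 * Cu / Cl,
    by positivity, by positivity, ?_⟩
  intro L F hL hA μ hμ h2int
  obtain ⟨h1, hbd, hup, hlow⟩ := hA
  set m := sInf (Set.range F) with hm
  have hFm : ∀ x, m ≤ F x := fun x => csInf_le hbd ⟨x, rfl⟩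
  set G : EuclideanSpace ℝ (Fin d) → ℝ := fun x => F x - m with hGdef
  have hG0 : ∀ x, 0 ≤ G x := fun x => sub_nonneg.2 (hFm x)
  have hFc : Continuous F := cont_of_A h1
  have hGc : Continuous G := hFc.sub continuous_const
  set w : EuclideanSpace ℝ (Fin d) → ℝ := fun x => Real.exp (-α * G x) with hwdef
  have hwc : Continuous w := (continuous_const.mul hGc).rexp
  have hwpos : ∀ x, 0 < w x := fun x => Real.exp_pos _
  have hwle1 : ∀ x, w x ≤ 1 := by
    intro x
    rw [hwdef]
    simp only
    rw [Real.exp_le_one_iff]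
    have := mul_nonneg hα.le (hG0 x)
    linarith
  set m2 := ∫ x, ‖x‖ ^ 2 ∂μ with hm2
  have hm2nn : 0 ≤ m2 := integral_nonneg fun x => by positivity
  -- integrability facts
  have hxid : Integrable (fun x : EuclideanSpace ℝ (Fin d) => x) μ := by
    refine Integrable.mono' (g := fun x => (1:ℝ) + ‖x‖ ^ 2)
      ((integrable_const 1).add h2int) continuous_id.aestronglyMeasurable
      (ae_of_all _ fun x => ?_)
    nlinarith [norm_nonneg x, sq_nonneg (‖x‖ - 1)]
  have hiw : Integrable w μ := by
    refine Integrable.mono' (g := fun _ => (1:ℝ)) (integrable_const 1)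
      hwc.aestronglyMeasurable (ae_of_all _ fun x => ?_)
    rw [Real.norm_of_nonneg (hwpos x).le]; exact hwle1 x
  have hiwx : Integrable (fun x => w x • x) μ := by
    refine Integrable.mono' (g := fun x => (1:ℝ) + ‖x‖ ^ 2)
      ((integrable_const 1).add h2int)
      (hwc.smul continuous_id).aestronglyMeasurable (ae_of_all _ fun x => ?_)
    rw [norm_smul, Real.norm_of_nonneg (hwpos x).le]
    show w x * ‖x‖ ≤ 1 + ‖x‖ ^ 2
    have h1x : w x * ‖x‖ ≤ ‖x‖ := by
      nlinarith [hwle1 x, (hwpos x).le, norm_nonneg x]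
    nlinarith [norm_nonneg x, sq_nonneg (‖x‖ - 1)]
  have hiwn : Integrable (fun x => w x * ‖x‖) μ := by
    refine Integrable.mono' (g := fun x => (1:ℝ) + ‖x‖ ^ 2)
      ((integrable_const 1).add h2int)
      (hwc.mul continuous_norm).aestronglyMeasurable (ae_of_all _ fun x => ?_)
    rw [Real.norm_of_nonneg (by positivity)]
    show w x * ‖x‖ ≤ 1 + ‖x‖ ^ 2
    have h1x : w x * ‖x‖ ≤ ‖x‖ := by
      nlinarith [hwle1 x, (hwpos x).le, norm_nonneg x]
    nlinarith [norm_nonneg x, sq_nonneg (‖x‖ - 1)]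
  have hiw2 : Integrable (fun x => w x * ‖x‖ ^ 2) μ := by
    refine Integrable.mono' (g := fun x => ‖x‖ ^ 2) h2int
      (hwc.mul (continuous_norm.pow 2)).aestronglyMeasurable (ae_of_all _ fun x => ?_)
    rw [Real.norm_of_nonneg (by positivity)]
    show w x * ‖x‖ ^ 2 ≤ ‖x‖ ^ 2
    nlinarith [hwle1 x, (hwpos x).le, sq_nonneg ‖x‖]
  set I0 := ∫ x, w x ∂μ with hI0
  set I1 := ∫ x, w x • x ∂μ with hI1
  set I2 := ∫ x, w x * ‖x‖ ^ 2 ∂μ with hI2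
  -- Step C: lower bound on I0 via Jensen
  set c0 := Real.exp (-α * Cu * (1 + m2)) with hc0
  have hI0low : c0 ≤ I0 := by
    have hfint : Integrable (fun x => -α * Cu * (1 + ‖x‖ ^ 2)) μ := by
      apply Integrable.const_mul
      exact (integrable_const 1).add h2int
    have hexpint : Integrable (fun x => Real.exp (-α * Cu * (1 + ‖x‖ ^ 2))) μ := by
      refine Integrable.mono' (g := fun _ => (1:ℝ)) (integrable_const 1)
        ((continuous_const.mul ((continuous_const).add
          (continuous_norm.pow 2))).rexp).aestronglyMeasurable (ae_of_all _ fun x => ?_)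
      rw [Real.norm_of_nonneg (Real.exp_pos _).le, Real.exp_le_one_iff]
      have : 0 ≤ α * Cu * (1 + ‖x‖ ^ 2) := by positivity
      linarith
    have hjensen : Real.exp (∫ x, -α * Cu * (1 + ‖x‖ ^ 2) ∂μ) ≤
        ∫ x, Real.exp (-α * Cu * (1 + ‖x‖ ^ 2)) ∂μ := by
      have := convexOn_exp.map_integral_le (μ := μ)
        Real.continuous_exp.continuousOn isClosed_univ
        (ae_of_all _ fun x => Set.mem_univ _) hfint (by exact hexpint)
      exact this
    have hcomp : ∫ x, -α * Cu * (1 + ‖x‖ ^ 2) ∂μ = -α * Cu * (1 + m2) := by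
      rw [integral_const_mul]
      congr 1
      rw [integral_add (integrable_const 1) h2int]
      simp [hm2]
    rw [hcomp] at hjensen
    have hmono : ∫ x, Real.exp (-α * Cu * (1 + ‖x‖ ^ 2)) ∂μ ≤ I0 := by
      apply integral_mono hexpint hiw
      intro x
      show Real.exp (-α * Cu * (1 + ‖x‖ ^ 2)) ≤ Real.exp (-α * G x)
      apply Real.exp_le_exp.2
      have hgx : G x ≤ Cu * (1 + ‖x‖ ^ 2) := hup x
      have := mul_le_mul_of_nonneg_left hgx hα.le
      nlinarith
    exact le_trans hjensen hmono
  have hc0pos : 0 < c0 := Real.exp_pos _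
  have hI0pos : 0 < I0 := lt_of_lt_of_le hc0pos hI0low
  have hI2nn : 0 ≤ I2 := integral_nonneg fun x => by positivity
  -- Step A: Xalpha = I0⁻¹ • I1
  have hXeq : Xalpha α F μ = I0⁻¹ • I1 := by
    have hsplit : ∀ x, Real.exp (-α * F x) = Real.exp (-α * m) * w x := by
      intro x
      rw [hwdef]
      simp only [← Real.exp_add, hGdef]
      congr 1; ring
    rw [Xalpha]
    have e1 : ∫ x, Real.exp (-α * F x) ∂μ = Real.exp (-α * m) * I0 := by
      simp_rw [hsplit]; rw [integral_const_mul]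
    have e2 : ∫ x, Real.exp (-α * F x) • x ∂μ = Real.exp (-α * m) • I1 := by
      simp_rw [hsplit, mul_smul]
      rw [integral_smul]
    rw [e1, e2, smul_smul, mul_inv]
    congr 1
    have hne := Real.exp_ne_zero (-α * m)
    field_simp
  -- Step B: ‖Xalpha‖² ≤ I2 / I0 (Cauchy–Schwarz)
  have hCS : ‖I1‖ ^ 2 ≤ I0 * I2 := by
    have hn : ‖I1‖ ≤ ∫ x, w x * ‖x‖ ∂μ := by
      calc ‖I1‖ ≤ ∫ x, ‖w x • x‖ ∂μ := norm_integral_le_integral_norm _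
        _ = ∫ x, w x * ‖x‖ ∂μ := by
            congr 1; funext x; rw [norm_smul, Real.norm_of_nonneg (hwpos x).le]
    have hhold : ∫ x, w x * ‖x‖ ∂μ ≤ I0 ^ ((1:ℝ)/2) * I2 ^ ((1:ℝ)/2) := by
      have hpq : Real.HolderConjugate 2 2 := by
        constructor <;> norm_num
      have hf : MemLp (fun x => Real.sqrt (w x)) (ENNReal.ofReal 2) μ := by
        rw [show ENNReal.ofReal 2 = 2 by norm_num]
        rw [memLp_two_iff_integrable_sq (hwc.sqrt.aestronglyMeasurable)]
        refine hiw.congr ?_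
        exact ae_of_all _ fun x => (Real.sq_sqrt (hwpos x).le).symm
      have hg : MemLp (fun x => Real.sqrt (w x) * ‖x‖) (ENNReal.ofReal 2) μ := by
        rw [show ENNReal.ofReal 2 = 2 by norm_num]
        rw [memLp_two_iff_integrable_sq (f := fun x => Real.sqrt (w x) * ‖x‖)
          ((hwc.sqrt.mul continuous_norm).aestronglyMeasurable)]
        refine hiw2.congr ?_
        refine ae_of_all _ fun x => ?_
        show w x * ‖x‖ ^ 2 = (Real.sqrt (w x) * ‖x‖) ^ 2
        rw [mul_pow, Real.sq_sqrt (hwpos x).le]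
      have := integral_mul_le_Lp_mul_Lq_of_nonneg hpq
        (ae_of_all _ fun x => Real.sqrt_nonneg (w x))
        (ae_of_all _ fun x => by positivity) hf hg
      have heq1 : ∫ x, Real.sqrt (w x) * (Real.sqrt (w x) * ‖x‖) ∂μ = ∫ x, w x * ‖x‖ ∂μ := by
        congr 1; funext x
        rw [← mul_assoc, Real.mul_self_sqrt (hwpos x).le]
      have heq2 : ∫ x, Real.sqrt (w x) ^ (2:ℝ) ∂μ = I0 := by
        congr 1; funext x
        rw [Real.rpow_two, Real.sq_sqrt (hwpos x).le]
      have heq3 : ∫ x, (Real.sqrt (w x) * ‖x‖) ^ (2:ℝ) ∂μ = I2 := by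
        congr 1; funext x
        rw [Real.rpow_two, mul_pow, Real.sq_sqrt (hwpos x).le]
      rw [heq1, heq2, heq3] at this
      exact this
    have hrhs : (I0 ^ ((1:ℝ)/2) * I2 ^ ((1:ℝ)/2)) ^ 2 = I0 * I2 := by
      rw [mul_pow, ← Real.rpow_natCast (I0 ^ ((1:ℝ)/2)) 2, ← Real.rpow_natCast (I2 ^ ((1:ℝ)/2)) 2,
        ← Real.rpow_mul hI0pos.le, ← Real.rpow_mul hI2nn]
      norm_num
    have hnn : 0 ≤ ∫ x, w x * ‖x‖ ∂μ := integral_nonneg fun x => by positivity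
    calc ‖I1‖ ^ 2 ≤ (∫ x, w x * ‖x‖ ∂μ) ^ 2 := by
          apply pow_le_pow_left₀ (norm_nonneg _) hn
      _ ≤ (I0 ^ ((1:ℝ)/2) * I2 ^ ((1:ℝ)/2)) ^ 2 := by
          apply pow_le_pow_left₀ hnn hhold
      _ = I0 * I2 := hrhs
  -- Step D: I2 ≤ (M² + a/Cl) I0 + K c0 with a = 2Cu(1+m2), K = 2/(α e Cl)
  set a := 2 * Cu * (1 + m2) with ha
  have hann : 0 ≤ a := by positivity
  have hac0 : Real.exp (-α * a / 2) = c0 := by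
    rw [hc0]; congr 1; ring
  set K := 2 / (α * Real.exp 1) with hK
  have hptwise : ∀ x, w x * ‖x‖ ^ 2 ≤ (M ^ 2 + a / Cl) * w x + K / Cl * c0 := by
    intro x
    have hwx := hwpos x
    have hKc0 : 0 ≤ K / Cl * c0 := by positivity
    rcases le_total ‖x‖ M with hxM | hxM
    · have h8 : ‖x‖ ^ 2 ≤ M ^ 2 := by nlinarith [norm_nonneg x]
      have h9 : w x * ‖x‖ ^ 2 ≤ M ^ 2 * w x := by nlinarith [hwx.le]
      have h10 : (M ^ 2 + a / Cl) * w x = M ^ 2 * w x + a / Cl * w x := by ring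
      have h11 : 0 ≤ a / Cl * w x := mul_nonneg (div_nonneg hann hCl.le) hwx.le
      linarith
    · have hGx : ‖x‖ ^ 2 ≤ G x / Cl := by
        rw [le_div_iff₀ hCl]
        have hlx : Cl * ‖x‖ ^ 2 ≤ G x := hlow x hxM
        linarith
      have hkey := texp_le hα hann (hG0 x)
      have hkey' : G x * w x ≤ a * w x + K * Real.exp (-α * a / 2) := by
        rw [hwdef]; exact hkey
      have : w x * ‖x‖ ^ 2 ≤ w x * (G x / Cl) :=
        mul_le_mul_of_nonneg_left hGx hwx.le
      rw [hac0] at hkey'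
      have h4 : w x * (G x / Cl) = (G x * w x) / Cl := by ring
      have h5 : (G x * w x) / Cl ≤ (a * w x + K * c0) / Cl := by
        gcongr
      have h6 : (a * w x + K * c0) / Cl = a / Cl * w x + K / Cl * c0 := by ring
      have h7 : 0 ≤ M ^ 2 * w x := mul_nonneg (sq_nonneg M) hwx.le
      linarith
  have hD : I2 ≤ (M ^ 2 + a / Cl) * I0 + K / Cl * c0 := by
    have hrint : Integrable (fun x => (M ^ 2 + a / Cl) * w x + K / Cl * c0) μ := by
      exact (hiw.const_mul _).add (integrable_const _)
    calc I2 ≤ ∫ x, ((M ^ 2 + a / Cl) * w x + K / Cl * c0) ∂μ :=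
          integral_mono hiw2 hrint hptwise
      _ = (M ^ 2 + a / Cl) * I0 + K / Cl * c0 := by
          rw [integral_add (hiw.const_mul _) (integrable_const _), integral_const_mul,
            integral_const]
          simp [hI0]
  -- Combine
  have hfinal : I2 ≤ (M ^ 2 + 2 * Cu / Cl + 2 / (α * Real.exp 1 * Cl) + (2 * Cu / Cl) * m2) * I0 := by
    have h7 : K / Cl * c0 ≤ K / Cl * I0 := by
      apply mul_le_mul_of_nonneg_left hI0low (by positivity)
    have h8 : (M ^ 2 + a / Cl) * I0 + K / Cl * I0 =
        (M ^ 2 + 2 * Cu / Cl + 2 / (α * Real.exp 1 * Cl) + (2 * Cu / Cl) * m2) * I0 := by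
      rw [ha, hK]; field_simp; ring
    linarith
  rw [hXeq]
  rw [norm_smul, mul_pow, Real.norm_of_nonneg (inv_nonneg.2 hI0pos.le)]
  have hgoal : I0⁻¹ ^ 2 * ‖I1‖ ^ 2 ≤ I0⁻¹ ^ 2 * (I0 * I2) := by
    apply mul_le_mul_of_nonneg_left hCS (by positivity)
  have heq : I0⁻¹ ^ 2 * (I0 * I2) = I2 / I0 := by
    field_simp
  have hfin2 : I2 / I0 ≤ M ^ 2 + 2 * Cu / Cl + 2 / (α * Real.exp 1 * Cl) + 2 * Cu / Cl * m2 := by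
    rw [div_le_iff₀ hI0pos]
    linarith [hfinal]
  calc I0⁻¹ ^ 2 * ‖I1‖ ^ 2 ≤ I2 / I0 := by rw [← heq]; exact hgoal
    _ ≤ M ^ 2 + 2 * Cu / Cl + 2 / (α * Real.exp 1 * Cl) + 2 * Cu / Cl * m2 := hfin2
    _ = M ^ 2 + 2 * Cu / Cl + 2 / (α * Real.exp 1 * Cl) + 2 * Cu / Cl * m2 := rfl
end

section
/- Let F : ℝ^d → ℝ be Borel measurable and bounded from below with F̲ := inf F, let α > 0, and let ρ be a Borel probability measure on ℝ^d with finite second moment. Then ∫_{ℝ^d} |x − X^α(ρ)|² ρ(dx) ≤ ( ∫_{ℝ^d} ∫_{ℝ^d} |x − y|² e^{−αF(y)} ρ(dy) ρ(dx) ) / ( ∫_{ℝ^d} e^{−αF(y)} ρ(dy) ) ≤ 2 e^{−αF̲} · ( ∫_{ℝ^d} |x − m_ρ|² ρ(dx) ) / ( ∫_{ℝ^d} e^{−αF(y)} ρ(dy) ), where m_ρ := ∫_{ℝ^d} x ρ(dx) is the mean of ρ. -/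
open MeasureTheory Filter

section aux

variable {d : ℕ}

local notation "E" => EuclideanSpace ℝ (Fin d)
local notation "⟪" x ", " y "⟫" => @inner ℝ _ _ x y

lemma id_integrable (ρ : Measure (EuclideanSpace ℝ (Fin d))) [IsProbabilityMeasure ρ]
    (hmom : Integrable (fun x : E => ‖x‖ ^ 2) ρ) : Integrable (fun x : E => x) ρ := by
  refine Integrable.mono' ((integrable_const (1:ℝ)).add hmom) (aestronglyMeasurable_id) ?_
  filter_upwards with x
  simp only [Pi.add_apply, id_eq]
  nlinarith [sq_nonneg (‖x‖ - 1), norm_nonneg x]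

set_option maxHeartbeats 1000000 in
lemma aux_main (ρ : Measure (EuclideanSpace ℝ (Fin d))) [IsProbabilityMeasure ρ]
    (hmom : Integrable (fun x : E => ‖x‖ ^ 2) ρ)
    (w : E → ℝ) (C : ℝ) (hwmeas : Measurable w)
    (hwpos : ∀ y, 0 < w y) (hwleC : ∀ y, w y ≤ C) :
    (∫ x, ‖x - (∫ y, w y ∂ρ)⁻¹ • ∫ y, w y • y ∂ρ‖ ^ 2 ∂ρ) ≤
      (∫ x, ∫ y, ‖x - y‖ ^ 2 * w y ∂ρ ∂ρ) / (∫ y, w y ∂ρ) ∧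
    (∫ x, ∫ y, ‖x - y‖ ^ 2 * w y ∂ρ ∂ρ) / (∫ y, w y ∂ρ) ≤
      2 * C * (∫ x, ‖x - ∫ y, y ∂ρ‖ ^ 2 ∂ρ) / (∫ y, w y ∂ρ) := by
  have hCpos : 0 < C := lt_of_lt_of_le (hwpos 0) (hwleC 0)
  have hids : Integrable (fun x : E => x) ρ := id_integrable ρ hmom
  have hwint : Integrable w ρ := by
    refine Integrable.mono' (integrable_const C) hwmeas.aestronglyMeasurable ?_
    filter_upwards with y
    rw [Real.norm_of_nonneg (hwpos y).le]; exact hwleC y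
  set Z : ℝ := ∫ y, w y ∂ρ with hZdef
  have hZpos : 0 < Z := by
    rw [hZdef, integral_pos_iff_support_of_nonneg (fun y => (hwpos y).le) hwint]
    have : Function.support w = Set.univ := by
      ext y; simp [Function.support, (hwpos y).ne']
    rw [this]; simp
  set mρ : E := ∫ y, y ∂ρ with hmdef
  set V : ℝ := ∫ x, ‖x - mρ‖ ^ 2 ∂ρ with hVdef
  -- integrability facts
  have hvint : ∀ c : E, Integrable (fun y : E => ‖c - y‖ ^ 2) ρ := by
    intro c
    refine Integrable.mono' (((integrable_const (2 * ‖c‖^2)).add (hmom.const_mul 2)))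
      ((continuous_const.sub continuous_id).norm.pow 2).aestronglyMeasurable ?_
    filter_upwards with y
    simp only [Pi.add_apply]
    rw [Real.norm_of_nonneg (by positivity)]
    have h := norm_sub_le c y
    nlinarith [norm_nonneg (c - y), norm_nonneg c, norm_nonneg y, sq_nonneg (‖c‖ - ‖y‖)]
  have hwvint : ∀ c : E, Integrable (fun y : E => ‖c - y‖ ^ 2 * w y) ρ := by
    intro c
    refine Integrable.mono' ((hvint c).const_mul C)
      ((((continuous_const.sub continuous_id).norm.pow 2).measurable).mul hwmeas).aestronglyMeasurable ?_
    filter_upwards with y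
    rw [Real.norm_of_nonneg (mul_nonneg (by positivity) (hwpos y).le)]
    exact mul_le_mul_of_nonneg_left (hwleC y) (by positivity) |>.trans_eq (mul_comm _ _)
  have hwy_int : Integrable (fun y : E => w y • y) ρ := by
    refine Integrable.mono' (hids.norm.const_mul C) (hwmeas.aestronglyMeasurable.smul hids.1) ?_
    filter_upwards with y
    rw [norm_smul, Real.norm_of_nonneg (hwpos y).le]
    exact mul_le_mul_of_nonneg_right (hwleC y) (norm_nonneg y)
  set b : E := Z⁻¹ • ∫ y, w y • y ∂ρ with hbdef
  -- b is the weighted barycenter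
  have hv2 : Integrable (fun y : E => w y • (b - y)) ρ := by
    have : (fun y : E => w y • (b - y)) = fun y => w y • b - w y • y := by
      funext y; rw [smul_sub]
    rw [this]; exact (hwint.smul_const b).sub hwy_int
  have hv0 : (∫ y, w y • (b - y) ∂ρ) = 0 := by
    have h1 : (fun y : E => w y • (b - y)) = fun y => w y • b - w y • y := by
      funext y; rw [smul_sub]
    rw [h1, integral_sub (hwint.smul_const b) hwy_int, integral_smul_const, hbdef,
      smul_smul, mul_inv_cancel₀ hZpos.ne', one_smul, sub_self]
  -- pointwise Jensen bound for the inner weighted integral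
  have jensen : ∀ x : E, Z * ‖x - b‖ ^ 2 ≤ ∫ y, ‖x - y‖ ^ 2 * w y ∂ρ := by
    intro x
    have key2 : ∀ y : E, ‖x - y‖ ^ 2 * w y =
        ‖x - b‖ ^ 2 * w y + (2 * ⟪x - b, w y • (b - y)⟫ + ‖b - y‖ ^ 2 * w y) := by
      intro y
      have h1 : x - y = (x - b) + (b - y) := by abel
      rw [h1, norm_add_sq_real, real_inner_smul_right]; ring
    have int1 : Integrable (fun y : E => ‖x - b‖ ^ 2 * w y) ρ := hwint.const_mul _
    have int2 : Integrable (fun y : E => 2 * ⟪x - b, w y • (b - y)⟫) ρ :=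
      (hv2.const_inner (x - b)).const_mul 2
    have int3 : Integrable (fun y : E => ‖b - y‖ ^ 2 * w y) ρ := hwvint b
    calc Z * ‖x - b‖ ^ 2 = ‖x - b‖ ^ 2 * Z + (2 * ⟪x - b, ∫ y, w y • (b - y) ∂ρ⟫ + 0) := by
          rw [hv0, inner_zero_right]; ring
      _ ≤ ‖x - b‖ ^ 2 * Z + (2 * ⟪x - b, ∫ y, w y • (b - y) ∂ρ⟫
            + ∫ y, ‖b - y‖ ^ 2 * w y ∂ρ) := by
          gcongr
          exact integral_nonneg fun y => mul_nonneg (by positivity) (hwpos y).le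
      _ = ∫ y, (‖x - b‖ ^ 2 * w y + (2 * ⟪x - b, w y • (b - y)⟫ + ‖b - y‖ ^ 2 * w y)) ∂ρ := by
          have int23 : Integrable
              (fun y : E => 2 * ⟪x - b, w y • (b - y)⟫ + ‖b - y‖ ^ 2 * w y) ρ := int2.add int3
          rw [integral_add int1 int23, integral_add int2 int3, integral_const_mul,
            integral_const_mul, integral_inner hv2, ← hZdef]
      _ = ∫ y, ‖x - y‖ ^ 2 * w y ∂ρ :=
          (integral_congr_ae (Eventually.of_forall fun y => (key2 y).symm))
  -- joint integrability of the weighted kernel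
  have Hmeas : AEStronglyMeasurable (fun p : E × E => ‖p.1 - p.2‖ ^ 2 * w p.2) (ρ.prod ρ) :=
    ((((continuous_fst.sub continuous_snd).norm.pow 2).measurable).mul
      (hwmeas.comp measurable_snd)).aestronglyMeasurable
  have S : ℝ := 0
  have Hprod : Integrable (fun p : E × E => ‖p.1 - p.2‖ ^ 2 * w p.2) (ρ.prod ρ) := by
    rw [integrable_prod_iff Hmeas]
    constructor
    · filter_upwards with x; exact hwvint x
    · have heq : (fun x : E => ∫ y, ‖(fun p : E × E => ‖p.1 - p.2‖ ^ 2 * w p.2) (x, y)‖ ∂ρ)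
          = fun x => ∫ y, ‖x - y‖ ^ 2 * w y ∂ρ := by
        funext x
        refine integral_congr_ae (Eventually.of_forall fun y => ?_)
        exact Real.norm_of_nonneg (mul_nonneg (by positivity) (hwpos y).le)
      rw [heq]
      refine Integrable.mono' ((integrable_const (C * ∫ y, 2 * ‖y‖ ^ 2 ∂ρ)).add
        ((hmom.const_mul 2).const_mul C)) ?_ ?_
      · simpa using Hmeas.integral_prod_right'
      · filter_upwards with x
        have hnn : 0 ≤ ∫ y, ‖x - y‖ ^ 2 * w y ∂ρ :=
          integral_nonneg fun y => mul_nonneg (by positivity) (hwpos y).le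
        rw [Real.norm_of_nonneg hnn]
        simp only [Pi.add_apply]
        have hpt : ∀ y : E, ‖x - y‖ ^ 2 * w y ≤ C * (2 * ‖y‖ ^ 2) + C * (2 * ‖x‖ ^ 2) := by
          intro y
          have h1 : ‖x - y‖ ^ 2 ≤ 2 * ‖x‖ ^ 2 + 2 * ‖y‖ ^ 2 := by
            nlinarith [norm_sub_le x y, norm_nonneg (x - y), sq_nonneg (‖x‖ - ‖y‖),
              norm_nonneg x, norm_nonneg y]
          nlinarith [mul_le_mul h1 (hwleC y) (hwpos y).le
            (by positivity : (0:ℝ) ≤ 2 * ‖x‖ ^ 2 + 2 * ‖y‖ ^ 2), (hwpos y).le, sq_nonneg ‖x - y‖]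
        calc ∫ y, ‖x - y‖ ^ 2 * w y ∂ρ
            ≤ ∫ y, (C * (2 * ‖y‖ ^ 2) + C * (2 * ‖x‖ ^ 2)) ∂ρ :=
              integral_mono (hwvint x)
                (((hmom.const_mul 2).const_mul C).add (integrable_const _)) hpt
          _ = C * (∫ y, 2 * ‖y‖ ^ 2 ∂ρ) + C * (2 * ‖x‖ ^ 2) := by
              rw [integral_add ((hmom.const_mul 2).const_mul C) (integrable_const _),
                integral_const_mul, integral_const]
              simp [measure_univ]
  -- unweighted inner integral identity
  have inner2 : ∀ x : E, ∫ y, ‖x - y‖ ^ 2 ∂ρ = ‖x - mρ‖ ^ 2 + V := by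
    intro x
    have key : ∀ y : E, ‖x - y‖ ^ 2
        = ‖x - mρ‖ ^ 2 + (2 * ⟪x - mρ, mρ - y⟫ + ‖mρ - y‖ ^ 2) := by
      intro y
      have h1 : x - y = (x - mρ) + (mρ - y) := by abel
      rw [h1, norm_add_sq_real]; ring
    have imy : Integrable (fun y : E => mρ - y) ρ := (integrable_const mρ).sub hids
    have i2 : Integrable (fun y : E => 2 * ⟪x - mρ, mρ - y⟫) ρ :=
      (imy.const_inner _).const_mul 2
    have i3 : Integrable (fun y : E => ‖mρ - y‖ ^ 2) ρ := hvint mρ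
    have i23 : Integrable (fun y : E => 2 * ⟪x - mρ, mρ - y⟫ + ‖mρ - y‖ ^ 2) ρ := i2.add i3
    have hmz : (∫ y, (mρ - y) ∂ρ) = 0 := by
      rw [integral_sub (integrable_const mρ) hids, integral_const]
      simp [← hmdef]
    calc ∫ y, ‖x - y‖ ^ 2 ∂ρ
        = ∫ y, (‖x - mρ‖ ^ 2 + (2 * ⟪x - mρ, mρ - y⟫ + ‖mρ - y‖ ^ 2)) ∂ρ :=
          integral_congr_ae (Eventually.of_forall key)
      _ = ‖x - mρ‖ ^ 2 + (2 * ⟪x - mρ, ∫ y, (mρ - y) ∂ρ⟫ + ∫ y, ‖mρ - y‖ ^ 2 ∂ρ) := by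
          rw [integral_add (integrable_const _) i23, integral_add i2 i3, integral_const,
            integral_const_mul, integral_inner imy]
          simp [measure_univ]
      _ = ‖x - mρ‖ ^ 2 + V := by
          rw [hmz, inner_zero_right, mul_zero, zero_add, hVdef]
          congr 1
          exact integral_congr_ae (Eventually.of_forall fun y => by simp [norm_sub_rev])
  constructor
  · rw [le_div_iff₀ hZpos]
    calc (∫ x, ‖x - b‖ ^ 2 ∂ρ) * Z = ∫ x, ‖x - b‖ ^ 2 * Z ∂ρ := (integral_mul_const Z _).symm
      _ ≤ ∫ x, ∫ y, ‖x - y‖ ^ 2 * w y ∂ρ ∂ρ := by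
          refine integral_mono_of_nonneg (Eventually.of_forall fun x => ?_)
            Hprod.integral_prod_left (Eventually.of_forall fun x => ?_)
          · show (0:ℝ) ≤ ‖x - b‖ ^ 2 * Z
            positivity
          · show ‖x - b‖ ^ 2 * Z ≤ ∫ y, ‖x - y‖ ^ 2 * w y ∂ρ
            rw [mul_comm]; exact jensen x
  · have hvint' : Integrable (fun y : E => ‖y - mρ‖ ^ 2) ρ :=
      (hvint mρ).congr (Eventually.of_forall fun y => by simp [norm_sub_rev])
    have hsum : Integrable (fun x : E => ‖x - mρ‖ ^ 2 + V) ρ := hvint'.add (integrable_const V)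
    have hgint : Integrable (fun x : E => C * (‖x - mρ‖ ^ 2 + V)) ρ := hsum.const_mul C
    have h2 : (∫ x, ∫ y, ‖x - y‖ ^ 2 * w y ∂ρ ∂ρ) ≤ 2 * C * V := by
      have hpt : ∀ x : E, ∫ y, ‖x - y‖ ^ 2 * w y ∂ρ ≤ C * (‖x - mρ‖ ^ 2 + V) := by
        intro x
        calc ∫ y, ‖x - y‖ ^ 2 * w y ∂ρ ≤ ∫ y, C * ‖x - y‖ ^ 2 ∂ρ :=
              integral_mono (hwvint x) ((hvint x).const_mul C) (fun y => by
                nlinarith [mul_nonneg (sq_nonneg ‖x - y‖) (sub_nonneg.mpr (hwleC y))])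
          _ = C * (‖x - mρ‖ ^ 2 + V) := by rw [integral_const_mul, inner2 x]
      calc (∫ x, ∫ y, ‖x - y‖ ^ 2 * w y ∂ρ ∂ρ) ≤ ∫ x, C * (‖x - mρ‖ ^ 2 + V) ∂ρ :=
            integral_mono_of_nonneg
              (Eventually.of_forall fun x =>
                integral_nonneg fun y => mul_nonneg (by positivity) (hwpos y).le)
              hgint
              (Eventually.of_forall hpt)
        _ = 2 * C * V := by
            rw [integral_const_mul, integral_add hvint' (integrable_const V),
              ← hVdef, integral_const]
            simp [measure_univ]; ring
    rw [div_le_div_iff₀ hZpos hZpos]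
    exact mul_le_mul_of_nonneg_right h2 hZpos.le

end aux

/-- Jensen-type estimate: the weighted variance around the regularized global best is
controlled by the variance of `ρ`:
`∫ |x − X^α(ρ)|² dρ ≤ (∫∫ |x−y|² e^{−αF(y)} dρ(y) dρ(x)) / ∫ e^{−αF} dρ
  ≤ 2 e^{−α inf F} (∫ |x − m_ρ|² dρ) / ∫ e^{−αF} dρ`. -/
theorem Xalpha_variance_bound (d : ℕ) (F : EuclideanSpace ℝ (Fin d) → ℝ)
    (hFmeas : Measurable F) (hFbdd : BddBelow (Set.range F))
    (α : ℝ) (hα : 0 < α)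
    (ρ : Measure (EuclideanSpace ℝ (Fin d))) [IsProbabilityMeasure ρ]
    (hmom : Integrable (fun x => ‖x‖ ^ 2) ρ) :
    (∫ x, ‖x - Xalpha α F ρ‖ ^ 2 ∂ρ) ≤
      (∫ x, ∫ y, ‖x - y‖ ^ 2 * Real.exp (-α * F y) ∂ρ ∂ρ) /
        (∫ y, Real.exp (-α * F y) ∂ρ) ∧
    (∫ x, ∫ y, ‖x - y‖ ^ 2 * Real.exp (-α * F y) ∂ρ ∂ρ) /
        (∫ y, Real.exp (-α * F y) ∂ρ) ≤
      2 * Real.exp (-α * sInf (Set.range F)) *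
        (∫ x, ‖x - ∫ y, y ∂ρ‖ ^ 2 ∂ρ) / (∫ y, Real.exp (-α * F y) ∂ρ) := by
  exact aux_main ρ hmom (fun y => Real.exp (-α * F y)) (Real.exp (-α * sInf (Set.range F)))
    ((hFmeas.const_mul (-α)).exp) (fun y => Real.exp_pos _)
    (fun y => Real.exp_le_exp.mpr
      (mul_le_mul_of_nonpos_left (csInf_le hFbdd (Set.mem_range_self y)) (by linarith)))
end

section
/- Let F : ℝ^d → ℝ satisfy Assumption (A) with constants L, C_u, C_l, M, and let α > 0. Then there exist constants c₁, c₂ > 0, depending only on α, M, C_u and C_l, such that for every Borel probability measure ρ on ℝ^d with finite fourth moment, ∫_{ℝ^d} |X^α(ρ) − x|⁴ ρ(dx) ≤ c₁ + c₂ ∫_{ℝ^d} |x|⁴ ρ(dx). -/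
open MeasureTheory Filter

/-- A function with the quadratic-growth Lipschitz-type estimate is continuous. -/
lemma continuous_of_A1 {d : ℕ} {F : EuclideanSpace ℝ (Fin d) → ℝ} {L : ℝ}
    (h1 : ∀ x y, |F x - F y| ≤ L * (‖x‖ + ‖y‖) * ‖x - y‖) (hL : 0 < L) :
    Continuous F := by
  rw [continuous_iff_continuousAt]
  intro x
  apply continuousAt_of_locally_lipschitz zero_lt_one (L * (2 * ‖x‖ + 1))
  intro y hy
  have h := h1 y x
  rw [Real.dist_eq, dist_eq_norm] at *
  have hny : ‖y‖ ≤ ‖x‖ + 1 := by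
    have h2 : ‖y‖ ≤ ‖y - x‖ + ‖x‖ := by
      calc ‖y‖ = ‖y - x + x‖ := by rw [sub_add_cancel]
      _ ≤ ‖y - x‖ + ‖x‖ := norm_add_le _ _
    linarith
  have hnn : (0:ℝ) ≤ ‖y - x‖ := norm_nonneg _
  calc |F y - F x| ≤ L * (‖y‖ + ‖x‖) * ‖y - x‖ := h
  _ ≤ L * (2 * ‖x‖ + 1) * ‖y - x‖ := by
      refine mul_le_mul_of_nonneg_right ?_ hnn
      nlinarith [mul_le_mul_of_nonneg_left (show ‖y‖ + ‖x‖ ≤ 2 * ‖x‖ + 1 by linarith) hL.le]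

/-- Cauchy–Schwarz: for a probability measure, `(∫ g)² ≤ ∫ g²`. -/
lemma sq_integral_le_integral_sq {X : Type*} [MeasurableSpace X] (μ : Measure X)
    [IsProbabilityMeasure μ] (g : X → ℝ) (hg : Integrable g μ)
    (hg2 : Integrable (fun x => g x ^ 2) μ) :
    (∫ x, g x ∂μ) ^ 2 ≤ ∫ x, g x ^ 2 ∂μ := by
  set m := ∫ x, g x ∂μ with hm
  have h0 : 0 ≤ ∫ x, (g x - m) ^ 2 ∂μ := integral_nonneg fun x => sq_nonneg _
  have hfun : (fun x => (g x - m) ^ 2) = fun x => g x ^ 2 - 2 * m * g x + m ^ 2 := by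
    funext x; ring
  have hint1 : Integrable (fun x => g x ^ 2 - 2 * m * g x) μ := by
    exact hg2.sub (hg.const_mul (2 * m))
  have hint2 : Integrable (fun x => 2 * m * g x) μ := hg.const_mul (2 * m)
  rw [hfun, integral_add hint1 (integrable_const _),
    integral_sub hg2 hint2, integral_const_mul, integral_const] at h0
  simp only [probReal_univ, one_smul, smul_eq_mul, one_mul] at h0
  nlinarith

set_option maxHeartbeats 1600000 in
/-- Fourth-moment bound: there exist constants `c₁, c₂ > 0`, depending only on
`α, M, Cu, Cl`, such that for every `F` satisfying Assumption (A) and every Borel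
probability measure `μ` with finite fourth moment,
`∫ |X^α(μ) − x|⁴ dμ ≤ c₁ + c₂ ∫ |x|⁴ dμ`. -/
theorem Xalpha_fourth_moment_bound (d : ℕ) (α M Cu Cl : ℝ)
    (hα : 0 < α) (hM : 0 < M) (hCu : 0 < Cu) (hCl : 0 < Cl) :
    ∃ c₁ c₂ : ℝ, 0 < c₁ ∧ 0 < c₂ ∧
      ∀ (L : ℝ) (F : EuclideanSpace ℝ (Fin d) → ℝ), 0 < L → AssumptionA F L Cu Cl M →
        ∀ (μ : Measure (EuclideanSpace ℝ (Fin d))), IsProbabilityMeasure μ →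
          Integrable (fun x => ‖x‖ ^ 4) μ →
          (∫ x, ‖Xalpha α F μ - x‖ ^ 4 ∂μ) ≤ c₁ + c₂ * ∫ x, ‖x‖ ^ 4 ∂μ := by
  set t : ℝ := α * Cl with ht
  have htpos : 0 < t := mul_pos hα hCl
  set r : ℝ := Cu / Cl with hrr
  have hrpos : 0 < r := by positivity
  have hClr : Cl * r = Cu := by rw [hrr]; field_simp
  set C' : ℝ := (Real.sqrt (2 * t))⁻¹ with hC'
  have hC'pos : 0 < C' := inv_pos.2 (Real.sqrt_pos.2 (by positivity))
  set A : ℝ := 2 * M ^ 2 + 12 * r + 8 * C' ^ 2 with hA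
  set B : ℝ := 8 * r with hB
  have hApos : 0 < A := by positivity
  have hBpos : 0 < B := by positivity
  clear_value t r C' A B
  refine ⟨16 * A ^ 2, 16 * B ^ 2 + 8, by linarith [pow_pos hApos 2],
    by linarith [sq_nonneg B], ?_⟩
  intro L F hL hF μ hμ h4
  obtain ⟨h1, hbdd, hup, hlow⟩ := hF
  set c : ℝ := sInf (Set.range F) with hc
  have hcle : ∀ x, c ≤ F x := fun x => csInf_le hbdd ⟨x, rfl⟩
  clear_value c
  set G : EuclideanSpace ℝ (Fin d) → ℝ := fun x => F x - c with hG
  have hG0 : ∀ x, 0 ≤ G x := fun x => sub_nonneg.2 (hcle x)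
  clear_value G
  set w : EuclideanSpace ℝ (Fin d) → ℝ := fun x => Real.exp (-(α * G x)) with hw
  have hwpos : ∀ x, 0 < w x := fun x => Real.exp_pos _
  have hwle1 : ∀ x, w x ≤ 1 :=
    fun x => Real.exp_le_one_iff.2 (neg_nonpos.2 (mul_nonneg hα.le (hG0 x)))
  clear_value w
  have hFcont : Continuous F := continuous_of_A1 h1 hL
  have hwcont : Continuous w := by
    rw [hw]
    simp only [hG]
    exact Real.continuous_exp.comp
      (continuous_const.mul (hFcont.sub continuous_const)).neg
  -- basic integrability
  have h14 : Integrable (fun x : EuclideanSpace ℝ (Fin d) => 1 + ‖x‖ ^ 4) μ :=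
    (integrable_const 1).add h4
  have hnorm : Integrable (fun x : EuclideanSpace ℝ (Fin d) => ‖x‖) μ := by
    refine h14.mono' continuous_norm.aestronglyMeasurable (ae_of_all _ fun x => ?_)
    have hn : (0:ℝ) ≤ ‖x‖ := norm_nonneg x
    rw [Real.norm_eq_abs, abs_of_nonneg hn]
    nlinarith [sq_nonneg (‖x‖ ^ 2 - 1), sq_nonneg (‖x‖ - 1), sq_nonneg (‖x‖ ^ 2 - ‖x‖)]
  have hsq : Integrable (fun x : EuclideanSpace ℝ (Fin d) => ‖x‖ ^ 2) μ := by
    refine h14.mono' (continuous_norm.pow 2).aestronglyMeasurable (ae_of_all _ fun x => ?_)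
    have hn : (0:ℝ) ≤ ‖x‖ := norm_nonneg x
    rw [Real.norm_eq_abs, abs_of_nonneg (by positivity)]
    nlinarith [sq_nonneg (‖x‖ ^ 2 - 1)]
  have hw_int : Integrable w μ := by
    refine (integrable_const (1:ℝ)).mono' hwcont.aestronglyMeasurable (ae_of_all _ fun x => ?_)
    rw [Real.norm_eq_abs, abs_of_pos (hwpos x)]; exact hwle1 x
  have hwx_int : Integrable (fun x => w x • x) μ := by
    refine hnorm.mono' (hwcont.smul continuous_id).aestronglyMeasurable (ae_of_all _ fun x => ?_)
    rw [norm_smul, Real.norm_eq_abs, abs_of_pos (hwpos x)]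
    nlinarith [norm_nonneg x, hwle1 x, hwpos x]
  have hwn_int : Integrable (fun x => w x * ‖x‖) μ := by
    refine hnorm.mono' (hwcont.mul continuous_norm).aestronglyMeasurable (ae_of_all _ fun x => ?_)
    have := hwpos x
    rw [Real.norm_eq_abs, abs_of_nonneg (by positivity)]
    nlinarith [norm_nonneg x, hwle1 x, hwpos x]
  -- moments
  set m₂ : ℝ := ∫ x, ‖x‖ ^ 2 ∂μ with hm2
  set m₄ : ℝ := ∫ x, ‖x‖ ^ 4 ∂μ with hm4
  have hm2nn : 0 ≤ m₂ := integral_nonneg fun x => by positivity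
  have hm4nn : 0 ≤ m₄ := integral_nonneg fun x => by positivity
  have hCS : m₂ ^ 2 ≤ m₄ := by
    have heq : (fun x : EuclideanSpace ℝ (Fin d) => (‖x‖ ^ 2) ^ 2) =
        fun x : EuclideanSpace ℝ (Fin d) => ‖x‖ ^ 4 := by funext x; ring
    have h := sq_integral_le_integral_sq μ (fun x => ‖x‖ ^ 2) hsq (by rw [heq]; exact h4)
    rw [heq] at h
    exact h
  clear_value m₂ m₄
  set T : ℝ := 2 * m₂ + 2 with hT
  have hTpos : 0 < T := by positivity
  clear_value T
  -- denominator lower bound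
  set D : ℝ := ∫ x, w x ∂μ with hD
  have hDpos : 0 < D := by
    rw [hD, integral_pos_iff_support_of_nonneg (fun x => (hwpos x).le) hw_int]
    have hsupp : Function.support w = Set.univ := by
      ext x; simp [Function.support, (hwpos x).ne']
    rw [hsupp]
    simp
  clear_value D
  set E : ℝ := Real.exp (-(α * Cu * (1 + T))) with hE
  have hEpos : 0 < E := Real.exp_pos _
  clear_value E
  have hDlow : E / 2 ≤ D := by
    have hpt : ∀ x : EuclideanSpace ℝ (Fin d), E * (1 - ‖x‖ ^ 2 / T) ≤ w x := by
      intro x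
      rcases le_or_gt (‖x‖ ^ 2) T with hx | hx
      · have h1' : Real.exp (-(α * Cu * (1 + ‖x‖ ^ 2))) ≤ w x := by
          rw [hw]
          apply Real.exp_le_exp.2
          have h := hup x
          simp only [hG]
          linarith [mul_le_mul_of_nonneg_left h hα.le]
        have h2' : E ≤ Real.exp (-(α * Cu * (1 + ‖x‖ ^ 2))) := by
          rw [hE]
          apply Real.exp_le_exp.2
          linarith [mul_le_mul_of_nonneg_left hx (mul_nonneg hα.le hCu.le)]
        have h3' : 0 ≤ ‖x‖ ^ 2 / T := by positivity
        nlinarith [mul_nonneg hEpos.le h3']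
      · have h4' : 1 - ‖x‖ ^ 2 / T < 0 := by
          rw [sub_neg]
          exact (one_lt_div hTpos).2 hx
        have h5' : E * (1 - ‖x‖ ^ 2 / T) ≤ 0 :=
          mul_nonpos_of_nonneg_of_nonpos hEpos.le h4'.le
        linarith [(hwpos x).le]
    have hint : Integrable (fun x : EuclideanSpace ℝ (Fin d) => E * (1 - ‖x‖ ^ 2 / T)) μ :=
      ((integrable_const 1).sub (hsq.div_const T)).const_mul E
    have hmono := integral_mono hint hw_int hpt
    rw [← hD] at hmono
    have hcomp : ∫ x, E * (1 - ‖x‖ ^ 2 / T) ∂μ = E * (1 - m₂ / T) := by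
      rw [integral_const_mul, integral_sub (integrable_const 1) (hsq.div_const T),
        integral_const, integral_div]
      simp only [probReal_univ, one_smul, smul_eq_mul, one_mul]
      rw [hm2]
    rw [hcomp] at hmono
    have hfrac : m₂ / T ≤ 1 / 2 := by
      rw [div_le_div_iff₀ hTpos (by norm_num)]
      linarith
    linarith [mul_le_mul_of_nonneg_left hfrac hEpos.le, hmono]
  -- choice of radius
  set b2 : ℝ := max (M ^ 2) (2 * r * (1 + T)) with hb2
  have hb2nn : 0 ≤ b2 := le_max_of_le_left (by positivity)
  set b : ℝ := Real.sqrt b2 with hb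
  have hbsq : b ^ 2 = b2 := Real.sq_sqrt hb2nn
  have hbnn : 0 ≤ b := Real.sqrt_nonneg _
  have hbM : M ≤ b := by
    rw [hb]
    calc M = Real.sqrt (M ^ 2) := (Real.sqrt_sq hM.le).symm
    _ ≤ Real.sqrt b2 := Real.sqrt_le_sqrt (le_max_left _ _)
  clear_value b2 b
  -- key pointwise bound
  set C'' : ℝ := C' * Real.exp (-(t * b2 / 2)) with hC''
  have hC''pos : 0 < C'' := mul_pos hC'pos (Real.exp_pos _)
  clear_value C''
  have hkey : ∀ x : EuclideanSpace ℝ (Fin d), w x * ‖x‖ ≤ b * w x + C'' := by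
    intro x
    rcases le_or_gt (‖x‖) b with hx | hx
    · linarith [mul_nonneg (sub_nonneg.2 hx) (hwpos x).le, hC''pos.le]
    · have hxM : M ≤ ‖x‖ := le_trans hbM hx.le
      have hwbd : w x ≤ Real.exp (-(t * ‖x‖ ^ 2)) := by
        rw [hw]
        apply Real.exp_le_exp.2
        have h := hlow x hxM
        simp only [hG]
        rw [ht]
        linarith [mul_le_mul_of_nonneg_left h hα.le]
      -- r e^{-t r²/2} ≤ C'
      have hs : (0:ℝ) < 1 + t * ‖x‖ ^ 2 / 2 := by positivity
      have hexple : Real.exp (-(t * ‖x‖ ^ 2 / 2)) ≤ (1 + t * ‖x‖ ^ 2 / 2)⁻¹ := by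
        rw [Real.exp_neg]
        exact inv_anti₀ hs (by linarith [Real.add_one_le_exp (t * ‖x‖ ^ 2 / 2)])
      have hu2 : Real.sqrt (2 * t) ^ 2 = 2 * t := Real.sq_sqrt (by positivity)
      have hupos : 0 < Real.sqrt (2 * t) := Real.sqrt_pos.2 (by positivity)
      have hub : ‖x‖ * Real.sqrt (2 * t) ≤ 1 + t * ‖x‖ ^ 2 / 2 := by
        have hexpand : (1 - Real.sqrt (2 * t) * ‖x‖ / 2) ^ 2
            = 1 - Real.sqrt (2 * t) * ‖x‖ + 2 * t * ‖x‖ ^ 2 / 4 := by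
          calc (1 - Real.sqrt (2 * t) * ‖x‖ / 2) ^ 2
              = 1 - Real.sqrt (2 * t) * ‖x‖ + Real.sqrt (2 * t) ^ 2 * ‖x‖ ^ 2 / 4 := by ring
          _ = 1 - Real.sqrt (2 * t) * ‖x‖ + 2 * t * ‖x‖ ^ 2 / 4 := by rw [hu2]
        linarith [sq_nonneg (1 - Real.sqrt (2 * t) * ‖x‖ / 2), hexpand]
      have hr1 : ‖x‖ * Real.exp (-(t * ‖x‖ ^ 2 / 2)) ≤ C' := by
        calc ‖x‖ * Real.exp (-(t * ‖x‖ ^ 2 / 2)) ≤ ‖x‖ * (1 + t * ‖x‖ ^ 2 / 2)⁻¹ :=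
              mul_le_mul_of_nonneg_left hexple (norm_nonneg x)
        _ ≤ C' := by
              rw [← div_eq_mul_inv, div_le_iff₀ hs, hC', inv_mul_eq_div, le_div_iff₀ hupos]
              exact hub
      have hx2 : b2 ≤ ‖x‖ ^ 2 := by
        rw [← hbsq]; exact pow_le_pow_left₀ hbnn hx.le 2
      have hmono : Real.exp (-(t * ‖x‖ ^ 2 / 2)) ≤ Real.exp (-(t * b2 / 2)) := by
        apply Real.exp_le_exp.2
        linarith [mul_le_mul_of_nonneg_left hx2 htpos.le]
      have hchain : w x * ‖x‖ ≤ C'' := by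
        calc w x * ‖x‖ ≤ Real.exp (-(t * ‖x‖ ^ 2)) * ‖x‖ :=
              mul_le_mul_of_nonneg_right hwbd (norm_nonneg x)
        _ = (‖x‖ * Real.exp (-(t * ‖x‖ ^ 2 / 2))) * Real.exp (-(t * ‖x‖ ^ 2 / 2)) := by
              have hsplit : Real.exp (-(t * ‖x‖ ^ 2))
                  = Real.exp (-(t * ‖x‖ ^ 2 / 2)) * Real.exp (-(t * ‖x‖ ^ 2 / 2)) := by
                rw [← Real.exp_add]; ring_nf
              rw [hsplit]; ring
        _ ≤ C' * Real.exp (-(t * ‖x‖ ^ 2 / 2)) :=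
              mul_le_mul_of_nonneg_right hr1 (Real.exp_pos _).le
        _ ≤ C' * Real.exp (-(t * b2 / 2)) :=
              mul_le_mul_of_nonneg_left hmono hC'pos.le
        _ = C'' := hC''.symm
      linarith [hchain, mul_nonneg hbnn (hwpos x).le]
  -- integrate the key bound
  have hN : ∫ x, w x * ‖x‖ ∂μ ≤ b * D + C'' := by
    have hint : Integrable (fun x : EuclideanSpace ℝ (Fin d) => b * w x + C'') μ :=
      (hw_int.const_mul b).add (integrable_const _)
    have h := integral_mono hwn_int hint hkey
    rw [integral_add (hw_int.const_mul b) (integrable_const _), integral_const_mul,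
      integral_const, probReal_univ, one_smul, ← hD] at h
    exact h
  -- rewrite Xalpha in terms of w
  have hex : ∀ x : EuclideanSpace ℝ (Fin d),
      Real.exp (-α * F x) = Real.exp (-(α * c)) * w x := by
    intro x
    rw [hw, ← Real.exp_add]
    congr 1
    simp only [hG]
    ring
  have hXeq : Xalpha α F μ = D⁻¹ • ∫ x, w x • x ∂μ := by
    rw [Xalpha]
    have hden : ∫ x, Real.exp (-α * F x) ∂μ = Real.exp (-(α * c)) * D := by
      simp_rw [hex]; rw [integral_const_mul, ← hD]
    have hnum : ∫ x, Real.exp (-α * F x) • x ∂μ =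
        Real.exp (-(α * c)) • ∫ x, w x • x ∂μ := by
      simp_rw [hex, mul_smul]; rw [integral_smul]
    rw [hden, hnum, smul_smul, mul_inv]
    congr 1
    field_simp [Real.exp_ne_zero, hDpos.ne']
  -- norm bound
  have hXnorm : ‖Xalpha α F μ‖ ≤ D⁻¹ * (b * D + C'') := by
    rw [hXeq, norm_smul, Real.norm_eq_abs, abs_of_pos (inv_pos.2 hDpos)]
    refine mul_le_mul_of_nonneg_left ?_ (inv_pos.2 hDpos).le
    calc ‖∫ x, w x • x ∂μ‖ ≤ ∫ x, ‖w x • x‖ ∂μ := norm_integral_le_integral_norm _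
    _ = ∫ x, w x * ‖x‖ ∂μ := by
          congr 1; funext x
          rw [norm_smul, Real.norm_eq_abs, abs_of_pos (hwpos x)]
    _ ≤ b * D + C'' := hN
  have hDinv : D⁻¹ ≤ 2 / E := by
    have h := inv_anti₀ (by positivity : (0:ℝ) < E / 2) hDlow
    rwa [inv_div] at h
  have hC''E : C'' ≤ C' * E := by
    rw [hC'', hE]
    refine mul_le_mul_of_nonneg_left (Real.exp_le_exp.2 ?_) hC'pos.le
    have hmax := le_max_right (M ^ 2) (2 * r * (1 + T))
    rw [← hb2] at hmax
    have he1 : t * (2 * r * (1 + T)) = 2 * (α * Cu * (1 + T)) := by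
      rw [ht, ← hClr]; ring
    have h2 := mul_le_mul_of_nonneg_left hmax htpos.le
    rw [he1] at h2
    linarith [h2]
  have hX : ‖Xalpha α F μ‖ ≤ b + 2 * C' := by
    have h7 : C'' * D⁻¹ ≤ 2 * C' := by
      calc C'' * D⁻¹ ≤ (C' * E) * (2 / E) :=
            mul_le_mul hC''E hDinv (inv_nonneg.2 hDpos.le) (mul_pos hC'pos hEpos).le
      _ = 2 * C' := by
            field_simp [hEpos.ne']
    have h8 : D⁻¹ * (b * D + C'') = b + C'' * D⁻¹ := by
      field_simp [hDpos.ne']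
    rw [h8] at hXnorm
    linarith
  -- second and fourth power bounds
  have hX2 : ‖Xalpha α F μ‖ ^ 2 ≤ A + B * m₂ := by
    have h9 := pow_le_pow_left₀ (norm_nonneg _) hX 2
    have h10 : (b + 2 * C') ^ 2 ≤ 2 * b2 + 8 * C' ^ 2 := by
      linarith [sq_nonneg (b - 2 * C'), hbsq]
    have h11 : b2 ≤ M ^ 2 + (6 * r + 4 * r * m₂) := by
      rw [hb2]
      refine max_le (le_add_of_nonneg_right
        (by linarith [hrpos, mul_nonneg hrpos.le hm2nn])) ?_
      rw [hT]
      have hM2 : (0:ℝ) ≤ M ^ 2 := sq_nonneg M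
      linarith [mul_nonneg hrpos.le hm2nn]
    rw [hA, hB]
    linarith [h9, h10, h11]
  have hX4 : ‖Xalpha α F μ‖ ^ 4 ≤ 2 * A ^ 2 + 2 * B ^ 2 * m₄ := by
    have h12 : ‖Xalpha α F μ‖ ^ 4 = (‖Xalpha α F μ‖ ^ 2) ^ 2 := by ring
    have h13 := pow_le_pow_left₀ (sq_nonneg (‖Xalpha α F μ‖)) hX2 2
    rw [h12]
    linarith [h13, sq_nonneg (A - B * m₂),
      mul_le_mul_of_nonneg_left hCS (sq_nonneg B)]
  -- conclusion
  have hptf : ∀ x : EuclideanSpace ℝ (Fin d),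
      ‖Xalpha α F μ - x‖ ^ 4 ≤ 8 * ‖Xalpha α F μ‖ ^ 4 + 8 * ‖x‖ ^ 4 := by
    intro x
    have h := norm_sub_le (Xalpha α F μ) x
    have h2 : ‖Xalpha α F μ - x‖ ^ 4 ≤ (‖Xalpha α F μ‖ + ‖x‖) ^ 4 :=
      pow_le_pow_left₀ (norm_nonneg _) h 4
    linarith [h2, sq_nonneg (‖Xalpha α F μ‖ ^ 2 - ‖Xalpha α F μ‖ * ‖x‖),
      sq_nonneg (‖Xalpha α F μ‖ * ‖x‖ - ‖x‖ ^ 2),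
      sq_nonneg (‖Xalpha α F μ‖ ^ 2 - ‖x‖ ^ 2)]
  have hrhs_int : Integrable
      (fun x : EuclideanSpace ℝ (Fin d) => 8 * ‖Xalpha α F μ‖ ^ 4 + 8 * ‖x‖ ^ 4) μ :=
    (integrable_const _).add (h4.const_mul 8)
  have hlhs_int : Integrable (fun x : EuclideanSpace ℝ (Fin d) => ‖Xalpha α F μ - x‖ ^ 4) μ := by
    refine hrhs_int.mono' ?_ (ae_of_all _ fun x => ?_)
    · exact (((continuous_const.sub continuous_id).norm.pow 4)).aestronglyMeasurable
    · rw [Real.norm_eq_abs, abs_of_nonneg (by positivity)]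
      exact hptf x
  calc ∫ x, ‖Xalpha α F μ - x‖ ^ 4 ∂μ
      ≤ ∫ x, (8 * ‖Xalpha α F μ‖ ^ 4 + 8 * ‖x‖ ^ 4) ∂μ :=
        integral_mono hlhs_int hrhs_int hptf
  _ = 8 * ‖Xalpha α F μ‖ ^ 4 + 8 * m₄ := by
        rw [integral_add (integrable_const _) (h4.const_mul 8), integral_const,
          integral_const_mul, probReal_univ, one_smul, ← hm4]
  _ ≤ 16 * A ^ 2 + (16 * B ^ 2 + 8) * m₄ := by linarith [hX4]
end

section
/- Let F : ℝ^d → ℝ be twice continuously differentiable, bounded from below with F̲ := inf F > −∞, and with uniformly bounded Hessian: ‖∇²F(x)‖ ≤ c_F for all x ∈ ℝ^d (operator norm). Let α > 0 and let ρ be a Borel probability measure on ℝ^d with finite second moment. Then | ∫_{ℝ^d} e^{−αF(x)} ⟨∇F(x), x − X^α(ρ)⟩ ρ(dx) | ≤ c_F e^{−αF̲} ∫_{ℝ^d} |x − X^α(ρ)|² ρ(dx). -/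
open MeasureTheory RealInnerProductSpace

/-- Drift estimate: if `F` is `C²`, bounded below, with uniformly bounded Hessian
`‖∇²F‖ ≤ c_F`, then
`|∫ e^{−αF(x)} ⟨∇F(x), x − X^α(ρ)⟩ dρ| ≤ c_F e^{−α inf F} ∫ |x − X^α(ρ)|² dρ`. -/
theorem drift_estimate (d : ℕ) (F : EuclideanSpace ℝ (Fin d) → ℝ)
    (hF : ContDiff ℝ 2 F) (hFbdd : BddBelow (Set.range F))
    (cF : ℝ) (hHess : ∀ x, ‖iteratedFDeriv ℝ 2 F x‖ ≤ cF)
    (α : ℝ) (hα : 0 < α)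
    (ρ : Measure (EuclideanSpace ℝ (Fin d))) [IsProbabilityMeasure ρ]
    (hmom : Integrable (fun x => ‖x‖ ^ 2) ρ) :
    |∫ x, Real.exp (-α * F x) * ⟪gradient F x, x - Xalpha α F ρ⟫ ∂ρ| ≤
      cF * Real.exp (-α * sInf (Set.range F)) * ∫ x, ‖x - Xalpha α F ρ‖ ^ 2 ∂ρ := by
  set X : EuclideanSpace ℝ (Fin d) := Xalpha α F ρ with hX
  set w : EuclideanSpace ℝ (Fin d) → ℝ := fun x => Real.exp (-α * F x) with hw
  set B : ℝ := Real.exp (-α * sInf (Set.range F)) with hB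
  have hcF0 : 0 ≤ cF := le_trans (norm_nonneg _) (hHess 0)
  have hwcont : Continuous w := Real.continuous_exp.comp (continuous_const.mul hF.continuous)
  have hwpos : ∀ x, 0 < w x := fun x => Real.exp_pos _
  have hwle : ∀ x, w x ≤ B := by
    intro x
    exact Real.exp_le_exp.2 (by
      have h1 : sInf (Set.range F) ≤ F x := csInf_le hFbdd (Set.mem_range_self x)
      nlinarith)
  -- gradient is continuous
  have hgradcont : Continuous (gradient F) := by
    have : Continuous (fderiv ℝ F) := hF.continuous_fderiv (by norm_num)
    exact (InnerProductSpace.toDual ℝ (EuclideanSpace ℝ (Fin d))).symm.continuous.comp this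
  -- gradient is Lipschitz with constant cF
  have hlip : ∀ x y : EuclideanSpace ℝ (Fin d), ‖gradient F x - gradient F y‖ ≤ cF * ‖x - y‖ := by
    intro x y
    have hmap : gradient F x - gradient F y =
        (InnerProductSpace.toDual ℝ (EuclideanSpace ℝ (Fin d))).symm (fderiv ℝ F x - fderiv ℝ F y) := by
      simp [gradient, map_sub]
    rw [hmap, LinearIsometryEquiv.norm_map]
    have hdiff : ∀ z : EuclideanSpace ℝ (Fin d), z ∈ (Set.univ : Set (EuclideanSpace ℝ (Fin d))) → DifferentiableAt ℝ (fderiv ℝ F) z := by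
      intro z _
      exact ((hF.fderiv_right (m := 1) (by norm_num)).differentiable (by norm_num)) z
    have hbound : ∀ z : EuclideanSpace ℝ (Fin d), z ∈ (Set.univ : Set (EuclideanSpace ℝ (Fin d))) → ‖fderiv ℝ (fderiv ℝ F) z‖ ≤ cF := by
      intro z _
      have e3 : ‖iteratedFDeriv ℝ 0 (fderiv ℝ (fderiv ℝ F)) z‖ = ‖fderiv ℝ (fderiv ℝ F) z‖ :=
        norm_iteratedFDeriv_zero
      have e1 : ‖iteratedFDeriv ℝ 0 (fderiv ℝ (fderiv ℝ F)) z‖ =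
          ‖iteratedFDeriv ℝ (0 + 1) (fderiv ℝ F) z‖ := norm_iteratedFDeriv_fderiv
      have e2 : ‖iteratedFDeriv ℝ 1 (fderiv ℝ F) z‖ = ‖iteratedFDeriv ℝ (1 + 1) F z‖ :=
        norm_iteratedFDeriv_fderiv
      have e4 : ‖iteratedFDeriv ℝ (1 + 1) F z‖ ≤ cF := hHess z
      norm_num at e1 e2
      linarith
    simpa using convex_univ.norm_image_sub_le_of_norm_fderiv_le hdiff hbound
      (Set.mem_univ y) (Set.mem_univ x)
  -- integrability facts
  have hw_int : Integrable w ρ := by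
    refine (integrable_const B).mono' hwcont.aestronglyMeasurable ?_
    filter_upwards with x
    rw [Real.norm_eq_abs, abs_of_pos (hwpos x)]
    exact hwle x
  have hnorm_int : Integrable (fun x : EuclideanSpace ℝ (Fin d) => ‖x‖) ρ := by
    refine ((integrable_const (1 : ℝ)).add hmom).mono'
      (continuous_norm.aestronglyMeasurable) ?_
    filter_upwards with x
    simp only [Pi.add_apply]
    rw [Real.norm_eq_abs, abs_of_nonneg (norm_nonneg x)]
    nlinarith [norm_nonneg x, sq_nonneg (‖x‖ - 1)]
  have hwx_int : Integrable (fun x : EuclideanSpace ℝ (Fin d) => w x • x) ρ := by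
    refine (hnorm_int.const_mul B).mono'
      ((hwcont.smul continuous_id).aestronglyMeasurable) ?_
    filter_upwards with x
    rw [norm_smul, Real.norm_eq_abs, abs_of_pos (hwpos x)]
    exact mul_le_mul_of_nonneg_right (hwle x) (norm_nonneg x)
  have hwxmX_int : Integrable (fun x : EuclideanSpace ℝ (Fin d) => w x • (x - X)) ρ := by
    have : (fun x : EuclideanSpace ℝ (Fin d) => w x • (x - X)) = fun x : EuclideanSpace ℝ (Fin d) => w x • x - w x • X := by
      ext x; rw [smul_sub]
    rw [this]
    exact hwx_int.sub (hw_int.smul_const X)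
  have hxX2_int : Integrable (fun x : EuclideanSpace ℝ (Fin d) => ‖x - X‖ ^ 2) ρ := by
    refine ((hmom.add (hnorm_int.const_mul (2 * ‖X‖))).add
      (integrable_const (‖X‖ ^ 2))).mono'
      (((continuous_id.sub continuous_const).norm.pow 2).aestronglyMeasurable) ?_
    filter_upwards with x
    simp only [Pi.add_apply]
    rw [Real.norm_eq_abs, abs_of_nonneg (by positivity)]
    have h1 : ‖x - X‖ ≤ ‖x‖ + ‖X‖ := norm_sub_le x X
    nlinarith [norm_nonneg (x - X), norm_nonneg x, norm_nonneg X]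
  -- the defining identity : ∫ w • (x - X) = 0
  have hc_pos : 0 < ∫ x, w x ∂ρ := by
    rw [integral_pos_iff_support_of_nonneg (fun x => (hwpos x).le) hw_int]
    have : Function.support w = Set.univ := by
      ext x; simp [Function.support, (hwpos x).ne']
    rw [this]
    simp
  have hI0 : ∫ x, w x • (x - X) ∂ρ = 0 := by
    have h1 : ∫ x, w x • (x - X) ∂ρ = (∫ x, w x • x ∂ρ) - (∫ x, w x ∂ρ) • X := by
      have : (fun x : EuclideanSpace ℝ (Fin d) => w x • (x - X)) = fun x : EuclideanSpace ℝ (Fin d) => w x • x - w x • X := by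
        ext x; rw [smul_sub]
      rw [this, integral_sub hwx_int (hw_int.smul_const X), integral_smul_const]
    rw [h1, hX]
    show (∫ x, w x • x ∂ρ) - (∫ x, w x ∂ρ) • ((∫ x, w x ∂ρ)⁻¹ • ∫ x, w x • x ∂ρ) = 0
    rw [smul_smul, mul_inv_cancel₀ hc_pos.ne', one_smul, sub_self]
  -- the subtracted term integrates to zero
  set g : EuclideanSpace ℝ (Fin d) := gradient F X with hg
  have hψ_int : Integrable (fun x => w x * ⟪g, x - X⟫) ρ := by
    have : (fun x => w x * ⟪g, x - X⟫) = fun x => ⟪g, w x • (x - X)⟫ := by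
      ext x; rw [real_inner_smul_right]
    rw [this]
    exact ContinuousLinearMap.integrable_comp (innerSL ℝ g) hwxmX_int
  have hψ0 : ∫ x, w x * ⟪g, x - X⟫ ∂ρ = 0 := by
    have h1 : (fun x => w x * ⟪g, x - X⟫) = fun x => ⟪g, w x • (x - X)⟫ := by
      ext x; rw [real_inner_smul_right]
    rw [h1, integral_inner hwxmX_int, hI0, inner_zero_right]
  -- pointwise bound on the difference
  have hptwise : ∀ x : EuclideanSpace ℝ (Fin d), |w x * ⟪gradient F x, x - X⟫ - w x * ⟪g, x - X⟫| ≤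
      cF * B * ‖x - X‖ ^ 2 := by
    intro x
    have h1 : w x * ⟪gradient F x, x - X⟫ - w x * ⟪g, x - X⟫ =
        w x * ⟪gradient F x - g, x - X⟫ := by
      rw [inner_sub_left]; ring
    rw [h1, abs_mul, abs_of_pos (hwpos x)]
    have h2 : |⟪gradient F x - g, x - X⟫| ≤ ‖gradient F x - g‖ * ‖x - X‖ :=
      abs_real_inner_le_norm _ _
    have h3 : ‖gradient F x - g‖ ≤ cF * ‖x - X‖ := hlip x X
    have h4 : |⟪gradient F x - g, x - X⟫| ≤ cF * ‖x - X‖ ^ 2 := by nlinarith [norm_nonneg (x - X)]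
    calc w x * |⟪gradient F x - g, x - X⟫| ≤ B * (cF * ‖x - X‖ ^ 2) :=
          mul_le_mul (hwle x) h4 (abs_nonneg _) (le_trans (Real.exp_pos _).le (hwle x))
      _ = cF * B * ‖x - X‖ ^ 2 := by ring
  -- integrability of the difference and of the main integrand
  have hdiffcont : Continuous (fun x => w x * ⟪gradient F x, x - X⟫ - w x * ⟪g, x - X⟫) := by
    have hic : Continuous fun x : EuclideanSpace ℝ (Fin d) => ⟪gradient F x, x - X⟫ :=
      hgradcont.inner (continuous_id.sub continuous_const)
    have hic2 : Continuous fun x : EuclideanSpace ℝ (Fin d) => ⟪g, x - X⟫ :=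
      continuous_const.inner (continuous_id.sub continuous_const)
    exact (hwcont.mul hic).sub (hwcont.mul hic2)
  have hdiff_int : Integrable
      (fun x => w x * ⟪gradient F x, x - X⟫ - w x * ⟪g, x - X⟫) ρ := by
    refine (hxX2_int.const_mul (cF * B)).mono' hdiffcont.aestronglyMeasurable ?_
    filter_upwards with x
    rw [Real.norm_eq_abs]
    exact hptwise x
  have hφ_int : Integrable (fun x => w x * ⟪gradient F x, x - X⟫) ρ := by
    have h := hdiff_int.add hψ_int
    have heq : ((fun x => w x * ⟪gradient F x, x - X⟫ - w x * ⟪g, x - X⟫) +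
        fun x => w x * ⟪g, x - X⟫) = fun x => w x * ⟪gradient F x, x - X⟫ := by
      funext x; simp only [Pi.add_apply]; ring
    rwa [heq] at h
  -- conclude
  have hsplit : ∫ x, w x * ⟪gradient F x, x - X⟫ ∂ρ =
      ∫ x, (w x * ⟪gradient F x, x - X⟫ - w x * ⟪g, x - X⟫) ∂ρ := by
    rw [integral_sub hφ_int hψ_int, hψ0, sub_zero]
  show |∫ x, w x * ⟪gradient F x, x - X⟫ ∂ρ| ≤ cF * B * ∫ x, ‖x - X‖ ^ 2 ∂ρ
  rw [hsplit]
  calc |∫ x, (w x * ⟪gradient F x, x - X⟫ - w x * ⟪g, x - X⟫) ∂ρ|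
      ≤ ∫ x, |w x * ⟪gradient F x, x - X⟫ - w x * ⟪g, x - X⟫| ∂ρ := by
        simpa [Real.norm_eq_abs] using
          norm_integral_le_integral_norm (fun x => w x * ⟪gradient F x, x - X⟫ - w x * ⟪g, x - X⟫)
    _ ≤ ∫ x, cF * B * ‖x - X‖ ^ 2 ∂ρ := by
        refine integral_mono hdiff_int.abs (hxX2_int.const_mul (cF * B)) ?_
        intro x; exact hptwise x
    _ = cF * B * ∫ x, ‖x - X‖ ^ 2 ∂ρ := integral_const_mul _ _
end
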